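/- Let C > 0 and α > 0, and define P : ℂ → ℝ by P(z) = exp(−C/|Re z|^α) if Re z ≠ 0 and P(z) = 0 if Re z = 0. Then P is C^∞-smooth on ℂ and satisfies the condition (I); that is, with Ũ := {z ∈ ℂ : Re z ≠ 0}: (I.1) for every integer k ≥ 1 and every b ∈ ℂ∖{0}, limsup_{Ũ ∋ z → 0} |Re(b zᵏ P_z(z)/P(z))| = +∞, and (I.2) limsup_{Ũ ∋ z → 0} |P_z(z)/P(z)| = +∞. -/

import Mathlib

open Filter Set Metric Complex

/-- The Wirtinger derivative `∂u/∂z = (u_x - i u_y)/2` of a real-valued function on `ℂ`. -/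
noncomputable def wDeriv (u : ℂ → ℝ) (z : ℂ) : ℂ :=
  (((fderiv ℝ u z) 1 : ℝ) - Complex.I * ((fderiv ℝ u z) Complex.I : ℝ)) / 2

open Topology
open scoped ContDiff

namespace Stmt6

noncomputable def S (C α : ℝ) (L : List (ℝ × ℝ)) (x : ℝ) : ℝ :=
  (L.map fun p => p.1 * x ^ p.2 * Real.exp (-C * x ^ (-α))).sum

noncomputable def dL (C α : ℝ) (L : List (ℝ × ℝ)) : List (ℝ × ℝ) :=
  L.flatMap fun p => [(p.1 * p.2, p.2 - 1), (p.1 * (C * α), p.2 - α - 1)]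

variable {C α : ℝ}

lemma tendsto_rpow_neg (s : ℝ) (hs : 0 < s) :
    Tendsto (fun x : ℝ => x ^ (-s)) (nhdsWithin 0 (Ioi 0)) atTop := by
  have h := (tendsto_rpow_atTop hs).comp tendsto_inv_nhdsGT_zero
  refine h.congr' ?_
  filter_upwards [self_mem_nhdsWithin] with x (hx : 0 < x)
  simp only [Function.comp]
  rw [Real.inv_rpow hx.le, ← Real.rpow_neg hx.le]

lemma tendsto_term (hC : 0 < C) (hα : 0 < α) (c r : ℝ) :
    Tendsto (fun x : ℝ => c * x ^ r * Real.exp (-C * x ^ (-α)))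
      (nhdsWithin 0 (Ioi 0)) (𝓝 0) := by
  have h1 := tendsto_rpow_neg α hα
  have h2 := ((tendsto_rpow_mul_exp_neg_mul_atTop_nhds_zero (-r / α) C hC).const_mul c).comp h1
  rw [mul_zero] at h2
  refine h2.congr' ?_
  filter_upwards [self_mem_nhdsWithin] with x (hx : 0 < x)
  have : (x ^ (-α)) ^ (-r / α) = x ^ r := by
    rw [← Real.rpow_mul hx.le]
    congr 1
    field_simp
  simp [Function.comp, this, mul_assoc]

lemma S_cons (p : ℝ × ℝ) (L : List (ℝ × ℝ)) (x : ℝ) :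
    S C α (p :: L) x = p.1 * x ^ p.2 * Real.exp (-C * x ^ (-α)) + S C α L x := by
  simp [S]

lemma tendsto_S (hC : 0 < C) (hα : 0 < α) (L : List (ℝ × ℝ)) :
    Tendsto (S C α L) (nhdsWithin 0 (Ioi 0)) (𝓝 0) := by
  induction L with
  | nil =>
      have h : S C α [] = fun _ : ℝ => (0:ℝ) := by funext y; simp [S]
      rw [h]; exact tendsto_const_nhds
  | cons p L ih =>
      have := (tendsto_term hC hα p.1 p.2).add ih
      rw [add_zero] at this
      exact this.congr fun x => (S_cons p L x).symm

lemma hasDerivAt_S (L : List (ℝ × ℝ)) {x : ℝ} (hx : 0 < x) :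
    HasDerivAt (S C α L) (S C α (dL C α L) x) x := by
  induction L with
  | nil =>
      have h : S C α [] = fun _ : ℝ => (0:ℝ) := by funext y; simp [S]
      have h2 : S C α (dL C α []) x = 0 := by simp [S, dL]
      rw [h, h2]; exact hasDerivAt_const x 0
  | cons p L ih =>
      have hr : HasDerivAt (fun y : ℝ => y ^ p.2) (p.2 * x ^ (p.2 - 1)) x :=
        Real.hasDerivAt_rpow_const (Or.inl hx.ne')
      have hg : HasDerivAt (fun y : ℝ => -C * y ^ (-α)) (-C * (-α * x ^ (-α - 1))) x :=
        (Real.hasDerivAt_rpow_const (Or.inl hx.ne')).const_mul (-C)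
      have hE : HasDerivAt (fun y : ℝ => Real.exp (-C * y ^ (-α)))
          (Real.exp (-C * x ^ (-α)) * (-C * (-α * x ^ (-α - 1)))) x := hg.exp
      have hterm := (hr.const_mul p.1).mul hE
      have hsum := hterm.add ih
      have heq : S C α (p :: L) = fun y =>
          (fun y : ℝ => p.1 * y ^ p.2) y * (fun y : ℝ => Real.exp (-C * y ^ (-α))) y
            + S C α L y := by
        funext y; simp [S, mul_assoc]
      rw [heq]
      refine hsum.congr_deriv ?_
      have hd : dL C α (p :: L) = (p.1 * p.2, p.2 - 1) :: (p.1 * (C * α), p.2 - α - 1)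
          :: dL C α L := by simp [dL]
      rw [hd, S_cons, S_cons]
      rw [show p.2 - α - 1 = p.2 + (-α - 1) by ring, Real.rpow_add hx]
      ring

end Stmt6

namespace Stmt6b
open Stmt6

noncomputable def Ln (C α : ℝ) (n : ℕ) : List (ℝ × ℝ) := (dL C α)^[n] [((1:ℝ), (0:ℝ))]

noncomputable def G (C α : ℝ) (n : ℕ) (x : ℝ) : ℝ :=
  if 0 < x then S C α (Ln C α n) x
  else if x < 0 then (-1 : ℝ) ^ n * S C α (Ln C α n) (-x) else 0

variable {C α : ℝ}

lemma G_pos {n : ℕ} {x : ℝ} (hx : 0 < x) : G C α n x = S C α (Ln C α n) x := if_pos hx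

lemma G_neg {n : ℕ} {x : ℝ} (hx : x < 0) :
    G C α n x = (-1 : ℝ) ^ n * S C α (Ln C α n) (-x) := by
  rw [G, if_neg (by linarith), if_pos hx]

lemma G_zero (n : ℕ) : G C α n 0 = 0 := by simp [G]

lemma tendsto_neg_Iio : Tendsto (fun x : ℝ => -x) (𝓝[<] (0:ℝ)) (𝓝[>] (0:ℝ)) := by
  apply tendsto_nhdsWithin_of_tendsto_nhds_of_eventually_within
  · exact ((continuous_neg.tendsto' 0 0 (by simp)).mono_left nhdsWithin_le_nhds)
  · filter_upwards [self_mem_nhdsWithin] with x (hx : x < 0)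
    exact mem_Ioi.2 (by linarith)

lemma G_tendsto_zero (hC : 0 < C) (hα : 0 < α) (n : ℕ) :
    Tendsto (G C α n) (𝓝 (0:ℝ)) (𝓝 0) := by
  have key : Tendsto (G C α n) (𝓝[<] (0:ℝ) ⊔ 𝓝[>] 0 ⊔ pure 0) (𝓝 0) := by
    refine Tendsto.sup (Tendsto.sup ?_ ?_) ?_
    · have h := ((tendsto_S hC hα (Ln C α n)).comp tendsto_neg_Iio).const_mul ((-1:ℝ)^n)
      rw [mul_zero] at h
      refine h.congr' ?_
      filter_upwards [self_mem_nhdsWithin] with x (hx : x < 0)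
      exact (G_neg hx).symm
    · refine (tendsto_S hC hα (Ln C α n)).congr' ?_
      filter_upwards [self_mem_nhdsWithin] with x (hx : 0 < x)
      exact (G_pos hx).symm
    · simpa [G_zero] using tendsto_pure_nhds (G C α n) 0
  rwa [nhdsLT_sup_nhdsGT, nhdsNE_sup_pure] at key

lemma G_hasDerivAt_pos (n : ℕ) {x : ℝ} (hx : 0 < x) :
    HasDerivAt (G C α n) (G C α (n+1) x) x := by
  have h := hasDerivAt_S (C := C) (α := α) (Ln C α n) hx
  have he : G C α n =ᶠ[𝓝 x] S C α (Ln C α n) := by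
    filter_upwards [eventually_gt_nhds hx] with y hy
    exact G_pos hy
  refine (h.congr_of_eventuallyEq he).congr_deriv ?_
  rw [G_pos hx, show Ln C α (n+1) = dL C α (Ln C α n) from Function.iterate_succ_apply' _ _ _]

lemma G_hasDerivAt_neg (n : ℕ) {x : ℝ} (hx : x < 0) :
    HasDerivAt (G C α n) (G C α (n+1) x) x := by
  have h := ((hasDerivAt_S (C := C) (α := α) (Ln C α n) (by linarith : (0:ℝ) < -x)).comp
      x (hasDerivAt_neg x)).const_mul ((-1:ℝ)^n)
  have he : G C α n =ᶠ[𝓝 x] fun y => (-1:ℝ)^n * S C α (Ln C α n) (-y) := by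
    filter_upwards [eventually_lt_nhds hx] with y hy
    exact G_neg hy
  refine (h.congr_of_eventuallyEq he).congr_deriv ?_
  rw [G_neg hx, show Ln C α (n+1) = dL C α (Ln C α n) from Function.iterate_succ_apply' _ _ _,
    pow_succ]
  ring

lemma G_cont (hC : 0 < C) (hα : 0 < α) (n : ℕ) : Continuous (G C α n) := by
  rw [continuous_iff_continuousAt]
  intro x
  rcases lt_trichotomy x 0 with hx | rfl | hx
  · exact (G_hasDerivAt_neg n hx).continuousAt
  · rw [ContinuousAt, G_zero]; exact G_tendsto_zero hC hα n
  · exact (G_hasDerivAt_pos n hx).continuousAt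

lemma G_hasDerivAt (hC : 0 < C) (hα : 0 < α) (n : ℕ) (x : ℝ) :
    HasDerivAt (G C α n) (G C α (n+1) x) x := by
  rcases lt_trichotomy x 0 with hx | rfl | hx
  · exact G_hasDerivAt_neg n hx
  · exact hasDerivAt_of_hasDerivAt_of_ne
      (fun y hy => by
        rcases hy.lt_or_gt with h | h
        · exact G_hasDerivAt_neg n h
        · exact G_hasDerivAt_pos n h)
      ((G_cont hC hα n).continuousAt) ((G_cont hC hα (n+1)).continuousAt)
  · exact G_hasDerivAt_pos n hx

lemma G_contDiff (hC : 0 < C) (hα : 0 < α) : ∀ n m : ℕ, ContDiff ℝ (n : WithTop ℕ∞) (G C α m) := by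
  intro n
  induction n with
  | zero => exact fun m => contDiff_zero.2 (G_cont hC hα m)
  | succ n ih =>
      intro m
      have hd : deriv (G C α m) = G C α (m+1) :=
        funext fun x => (G_hasDerivAt hC hα m x).deriv
      rw [show ((n+1 : ℕ) : WithTop ℕ∞) = (n : WithTop ℕ∞) + 1 by push_cast; rfl]
      refine contDiff_succ_iff_deriv.2 ⟨fun x => (G_hasDerivAt hC hα m x).differentiableAt,
        fun h => absurd h (by simp), ?_⟩
      rw [hd]; exact ih (m+1)

lemma G_contDiff_top (hC : 0 < C) (hα : 0 < α) (m : ℕ) : ContDiff ℝ (⊤ : ℕ∞) (G C α m) := by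
  rw [show ((⊤ : ℕ∞) : WithTop ℕ∞) = ∞ from rfl, contDiff_infty]
  exact fun n => G_contDiff hC hα n m

end Stmt6b

namespace Stmt6c
open Stmt6 Stmt6b

noncomputable def wDeriv' (u : ℂ → ℝ) (z : ℂ) : ℂ :=
  (((fderiv ℝ u z) 1 : ℝ) - Complex.I * ((fderiv ℝ u z) Complex.I : ℝ)) / 2

variable {C α : ℝ} {P : ℂ → ℝ}

lemma P_eq (hP : ∀ z : ℂ, P z = if z.re = 0 then 0 else Real.exp (-C / |z.re| ^ α)) (z : ℂ) :
    P z = G C α 0 z.re := by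
  rcases lt_trichotomy z.re 0 with hx | hx | hx
  · rw [hP, if_neg hx.ne, G_neg hx, Ln, Function.iterate_zero_apply]
    have h1 : |z.re| = -z.re := abs_of_neg hx
    have h2 : (-z.re) ^ (-α) = ((-z.re) ^ α)⁻¹ := Real.rpow_neg (by linarith) α
    simp [S, h1, h2, Real.rpow_zero, neg_div, div_eq_mul_inv]
  · rw [hP, if_pos hx, hx, G_zero]
  · rw [hP, if_neg hx.ne', G_pos hx, Ln, Function.iterate_zero_apply]
    have h1 : |z.re| = z.re := abs_of_pos hx
    have h2 : z.re ^ (-α) = (z.re ^ α)⁻¹ := Real.rpow_neg hx.le α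
    simp [S, h1, h2, Real.rpow_zero, neg_div, div_eq_mul_inv]

lemma wDeriv_eq (hC : 0 < C) (hα : 0 < α)
    (hP : ∀ z : ℂ, P z = if z.re = 0 then 0 else Real.exp (-C / |z.re| ^ α)) (z : ℂ) :
    wDeriv' P z = ((G C α 1 z.re / 2 : ℝ) : ℂ) := by
  have hPe : P = fun w : ℂ => G C α 0 w.re := funext (P_eq hP)
  have hre : HasFDerivAt (fun w : ℂ => w.re) Complex.reCLM z := Complex.reCLM.hasFDerivAt
  have hfd : HasFDerivAt P ((G C α 1 z.re) • Complex.reCLM) z := by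
    rw [hPe]
    exact (G_hasDerivAt hC hα 0 z.re).comp_hasFDerivAt z hre
  rw [wDeriv', hfd.fderiv]
  simp

lemma G1_pos (hx : (0:ℝ) < x) :
    G C α 1 x = C * α * x ^ (-α - 1) * Real.exp (-C * x ^ (-α)) := by
  rw [G_pos hx, Ln, Function.iterate_one, dL]
  have : (0:ℝ) - α - 1 = -α - 1 := by ring
  simp [S, this]

lemma ratio_eq (hC : 0 < C) (hα : 0 < α)
    (hP : ∀ z : ℂ, P z = if z.re = 0 then 0 else Real.exp (-C / |z.re| ^ α)) {z : ℂ}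
    (hz : 0 < z.re) :
    wDeriv' P z / (P z : ℂ) = ((C * α * z.re ^ (-α - 1) / 2 : ℝ) : ℂ) := by
  rw [wDeriv_eq hC hα hP, P_eq hP, G1_pos hz, G_pos hz, Ln, Function.iterate_zero_apply]
  have hS : S C α [((1:ℝ), (0:ℝ))] z.re = Real.exp (-C * z.re ^ (-α)) := by simp [S]
  rw [hS]
  have he : Real.exp (-C * z.re ^ (-α)) ≠ 0 := Real.exp_ne_zero _
  have he' : ((Real.exp (-C * z.re ^ (-α)) : ℝ) : ℂ) ≠ 0 := by exact_mod_cast he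
  rw [div_eq_iff he']
  push_cast
  ring

lemma rho_pos (hC : 0 < C) (hα : 0 < α) {x : ℝ} (hx : 0 < x) :
    0 < C * α * x ^ (-α - 1) / 2 := by
  have := Real.rpow_pos_of_pos hx (-α - 1)
  positivity

lemma tendsto_rho (hC : 0 < C) (hα : 0 < α) (c : ℝ) (hc : 0 < c) (s : ℝ) (hs : 0 < s) :
    Tendsto (fun x : ℝ => c * x ^ (-s)) (𝓝[>] (0:ℝ)) atTop :=
  (Stmt6.tendsto_rpow_neg s hs).const_mul_atTop hc

lemma exists_big (hC : 0 < C) (hα : 0 < α) {q : ℝ → ℝ} {c : ℝ} (hc : 0 < c)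
    (hq : ∀ᶠ x in 𝓝[>] (0:ℝ), c * x ≤ |q x|) (B ε : ℝ) (hε : 0 < ε) :
    ∃ x : ℝ, 0 < x ∧ x < ε ∧ B < |q x| * (C * α * x ^ (-α - 1) / 2) := by
  have ht : Tendsto (fun x : ℝ => (c * (C * α / 2)) * x ^ (-α)) (𝓝[>] (0:ℝ)) atTop :=
    tendsto_rho hC hα _ (by positivity) α hα
  have hev1 : ∀ᶠ x in 𝓝[>] (0:ℝ), B < (c * (C * α / 2)) * x ^ (-α) :=
    ht.eventually (eventually_gt_atTop B)
  have hev2 : ∀ᶠ x in 𝓝[>] (0:ℝ), x < ε :=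
    (eventually_lt_nhds hε).filter_mono nhdsWithin_le_nhds
  obtain ⟨x, ⟨⟨h1, h2⟩, h3⟩, (hx0 : 0 < x)⟩ :=
    (((hq.and hev1).and hev2).and self_mem_nhdsWithin).exists
  refine ⟨x, hx0, h3, ?_⟩
  have hrr : c * x * (C * α * x ^ (-α - 1) / 2) = (c * (C * α / 2)) * x ^ (-α) := by
    rw [show (-α : ℝ) = 1 + (-α - 1) by ring, Real.rpow_add hx0, Real.rpow_one]
    ring
  calc B < (c * (C * α / 2)) * x ^ (-α) := h2
    _ = c * x * (C * α * x ^ (-α - 1) / 2) := hrr.symm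
    _ ≤ |q x| * (C * α * x ^ (-α - 1) / 2) :=
        mul_le_mul_of_nonneg_right h1 (rho_pos hC hα hx0).le

lemma key_lower (hy0 : (0:ℝ) < y) {k : ℕ} (hk : 1 ≤ k) {b : ℂ} (hb : b ≠ 0) :
    ∃ c : ℝ, 0 < c ∧ ∀ᶠ x in 𝓝[>] (0:ℝ),
      c * x ≤ |(b * (((x:ℝ) : ℂ) + (y:ℂ) * Complex.I) ^ k).re| := by
  set w := b * Complex.I ^ k with hw
  have hw0 : w ≠ 0 := mul_ne_zero hb (pow_ne_zero _ Complex.I_ne_zero)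
  set q : ℝ → ℝ := fun x => (b * (((x:ℝ) : ℂ) + (y:ℂ) * Complex.I) ^ k).re with hq
  have hqc : Continuous q := by
    apply Complex.continuous_re.comp
    exact continuous_const.mul ((Complex.continuous_ofReal.add continuous_const).pow k)
  have hb0 : b * (((0:ℝ):ℂ) + (y:ℂ) * Complex.I) ^ k = ((y ^ k : ℝ) : ℂ) * w := by
    rw [hw]; push_cast; ring
  have hq0 : q 0 = y ^ k * w.re := by rw [hq]; simp only; rw [hb0, Complex.re_ofReal_mul]
  by_cases hre : w.re = 0
  · -- derivative case
    have hwim : w.im ≠ 0 := by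
      intro h; exact hw0 (Complex.ext_iff.2 ⟨by simp [hre], by simp [h]⟩)
    have h1 : HasDerivAt (fun x : ℝ => ((x:ℂ) + (y:ℂ) * Complex.I)) 1 0 := by
      simpa using (Complex.ofRealCLM.hasDerivAt (x := (0:ℝ))).add_const ((y:ℂ) * Complex.I)
    have h2 : HasDerivAt (fun u : ℂ => b * u ^ k) (b * (k * (((0:ℝ):ℂ) + (y:ℂ) * Complex.I) ^ (k - 1)))
        (((0:ℝ):ℂ) + (y:ℂ) * Complex.I) := by
      simpa using ((hasDerivAt_pow k (((0:ℝ):ℂ) + (y:ℂ) * Complex.I)).const_mul b)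
    have h3 := (h2.hasFDerivAt.restrictScalars ℝ).comp_hasDerivAt (0:ℝ) h1
    have h4 := Complex.reCLM.hasFDerivAt.comp_hasDerivAt (0:ℝ) h3
    set d : ℂ := b * (k * (((0:ℝ):ℂ) + (y:ℂ) * Complex.I) ^ (k - 1)) with hd
    have h5 : HasDerivAt q d.re 0 := by
      refine h4.congr_deriv ?_
      simp
    have hdre : d.re = k * y ^ (k - 1) * w.im := by
      have e1 : d = ((k * y ^ (k - 1) : ℝ) : ℂ) * (b * Complex.I ^ (k - 1)) := by
        rw [hd]; push_cast; ring
      have e2 : (b * Complex.I ^ (k - 1)).re = w.im := by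
        have : w = (b * Complex.I ^ (k - 1)) * Complex.I := by
          rw [hw, mul_assoc, ← pow_succ, Nat.sub_add_cancel hk]
        rw [this]; simp [Complex.mul_im]
      rw [e1, Complex.re_ofReal_mul, e2]
    have hdne : d.re ≠ 0 := by
      rw [hdre]
      exact mul_ne_zero (mul_ne_zero (Nat.cast_ne_zero.2 (by omega)) (pow_ne_zero _ hy0.ne')) hwim
    refine ⟨|d.re| / 2, by positivity, ?_⟩
    have hslope := (hasDerivAt_iff_tendsto_slope.1 h5).mono_left
      (nhdsWithin_mono 0 (fun x (hx : x ∈ Ioi (0:ℝ)) => (ne_of_gt hx : x ≠ 0)))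
    have habs : Tendsto (fun x => |slope q 0 x|) (𝓝[>] (0:ℝ)) (𝓝 |d.re|) := hslope.abs
    have h6 : ∀ᶠ x in 𝓝[>] (0:ℝ), |d.re| / 2 < |slope q 0 x| :=
      habs.eventually (eventually_gt_nhds (half_lt_self (abs_pos.2 hdne)))
    filter_upwards [h6, self_mem_nhdsWithin] with x hx1 (hx0 : 0 < x)
    have hsl : slope q 0 x = q x / x := by
      rw [slope_def_field]; rw [hq0, hre, mul_zero, sub_zero, sub_zero]
    rw [hsl, abs_div, abs_of_pos hx0] at hx1
    calc |d.re| / 2 * x ≤ |q x| / x * x := by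
          apply mul_le_mul_of_nonneg_right hx1.le hx0.le
      _ = |q x| := by field_simp
  · -- continuity case
    have hq0ne : q 0 ≠ 0 := by rw [hq0]; exact mul_ne_zero (pow_ne_zero _ hy0.ne') hre
    refine ⟨|q 0| / 2, by positivity, ?_⟩
    have habs : Tendsto (fun x => |q x|) (𝓝[>] (0:ℝ)) (𝓝 |q 0|) :=
      ((hqc.abs.tendsto 0).mono_left nhdsWithin_le_nhds)
    have h1 : ∀ᶠ x in 𝓝[>] (0:ℝ), |q 0| / 2 < |q x| :=
      habs.eventually (eventually_gt_nhds (half_lt_self (abs_pos.2 hq0ne)))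
    have h2 : ∀ᶠ x in 𝓝[>] (0:ℝ), x < 1 :=
      (eventually_lt_nhds one_pos).filter_mono nhdsWithin_le_nhds
    filter_upwards [h1, h2, self_mem_nhdsWithin] with x hx1 hx2 (hx0 : 0 < x)
    calc |q 0| / 2 * x ≤ |q 0| / 2 * 1 :=
          mul_le_mul_of_nonneg_left hx2.le (by positivity)
      _ ≤ |q x| := by linarith

end Stmt6c

/-- The function `P(z) = exp(-C/|Re z|^α)` (and `P(z) = 0` when `Re z = 0`) is `C^∞`-smooth
on `ℂ` and satisfies the condition (I). -/
theorem stmt_6 (C α : ℝ) (hC : 0 < C) (hα : 0 < α) (P : ℂ → ℝ)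
    (hP : ∀ z : ℂ, P z = if z.re = 0 then 0 else Real.exp (-C / |z.re| ^ α)) :
    ContDiff ℝ (⊤ : ℕ∞) P ∧
    (∀ k : ℕ, 1 ≤ k → ∀ b : ℂ, b ≠ 0 → ∀ B : ℝ,
      ∃ᶠ z in nhdsWithin (0:ℂ) {z : ℂ | z.re ≠ 0},
        B < |(b * z ^ k * wDeriv P z / (P z : ℂ)).re|) ∧
    (∀ B : ℝ,
      ∃ᶠ z in nhdsWithin (0:ℂ) {z : ℂ | z.re ≠ 0},
        B < ‖wDeriv P z / (P z : ℂ)‖) := by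
  have hwd : ∀ u z, wDeriv u z = Stmt6c.wDeriv' u z := fun u z => rfl
  refine ⟨?_, ?_, ?_⟩
  · have hPe : P = fun w : ℂ => Stmt6b.G C α 0 w.re := funext (Stmt6c.P_eq hP)
    rw [hPe]
    exact (Stmt6b.G_contDiff_top hC hα 0).comp Complex.reCLM.contDiff
  · intro k hk b hb B
    rw [frequently_iff]
    intro U hU
    obtain ⟨ε, hε, hsub⟩ := Metric.mem_nhdsWithin_iff.1 hU
    have hy0 : 0 < ε / 2 := by positivity
    obtain ⟨c, hc, hcev⟩ := Stmt6c.key_lower (y := ε/2) hy0 hk hb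
    obtain ⟨x, hx0, hxε, hxB⟩ := Stmt6c.exists_big hC hα hc hcev B (ε/2) hy0
    set z : ℂ := ((x:ℝ) : ℂ) + ((ε/2 : ℝ) : ℂ) * Complex.I with hz
    have hzre : z.re = x := by simp [hz]
    refine ⟨z, hsub ⟨?_, ?_⟩, ?_⟩
    · rw [mem_ball, dist_zero_right]
      calc ‖z‖ ≤ ‖((x:ℝ):ℂ)‖ + ‖((ε/2:ℝ):ℂ) * Complex.I‖ := norm_add_le _ _
        _ = |x| + |ε/2| := by simp [abs_div, abs_two]
        _ = x + ε/2 := by rw [abs_of_pos hx0, abs_of_pos hy0]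
        _ < ε := by linarith
    · exact (show z.re ≠ 0 by rw [hzre]; exact hx0.ne')
    · have h1 : b * z ^ k * wDeriv P z / (P z : ℂ)
          = b * z ^ k * (wDeriv P z / (P z : ℂ)) := mul_div_assoc _ _ _
      have hzre0 : 0 < z.re := by rw [hzre]; exact hx0
      rw [h1, hwd, Stmt6c.ratio_eq hC hα hP hzre0, hzre]
      have h2 : (b * z ^ k * ((C * α * x ^ (-α - 1) / 2 : ℝ) : ℂ)).re
          = (b * z ^ k).re * (C * α * x ^ (-α - 1) / 2) := by
        rw [Complex.mul_re]
        simp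
      rw [h2, abs_mul, abs_of_pos (Stmt6c.rho_pos hC hα hx0)]
      exact hxB
  · intro B
    rw [frequently_iff]
    intro U hU
    obtain ⟨ε, hε, hsub⟩ := Metric.mem_nhdsWithin_iff.1 hU
    have ht0 := Stmt6c.tendsto_rho hC hα (C * α / 2) (by positivity) (α + 1) (by linarith)
    have ht : Tendsto (fun x : ℝ => (C * α / 2) * x ^ (-α - 1)) (𝓝[>] (0:ℝ)) atTop :=
      ht0.congr (fun x => by rw [show (-(α + 1) : ℝ) = -α - 1 from by ring])
    have hev1 : ∀ᶠ x in 𝓝[>] (0:ℝ), B < (C * α / 2) * x ^ (-α - 1) :=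
      ht.eventually (eventually_gt_atTop B)
    have hev2 : ∀ᶠ x in 𝓝[>] (0:ℝ), x < ε :=
      (eventually_lt_nhds hε).filter_mono nhdsWithin_le_nhds
    obtain ⟨x, ⟨h1, h2⟩, (hx0 : 0 < x)⟩ := ((hev1.and hev2).and self_mem_nhdsWithin).exists
    set z : ℂ := ((x:ℝ) : ℂ) with hz
    have hzre : z.re = x := by simp [hz]
    refine ⟨z, hsub ⟨?_, ?_⟩, ?_⟩
    · rw [mem_ball, dist_zero_right]
      calc ‖z‖ = |x| := by simp [hz]
        _ = x := abs_of_pos hx0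
        _ < ε := h2
    · exact (show z.re ≠ 0 by rw [hzre]; exact hx0.ne')
    · have hzre0 : 0 < z.re := by rw [hzre]; exact hx0
      rw [hwd, Stmt6c.ratio_eq hC hα hP hzre0, hzre]
      rw [Complex.norm_real, Real.norm_eq_abs, abs_of_pos (Stmt6c.rho_pos hC hα hx0)]
      calc B < (C * α / 2) * x ^ (-α - 1) := h1
        _ = C * α * x ^ (-α - 1) / 2 := by ring
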